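/- Let f : ℝ^d → ℝ be L-smooth and C ∈ B¹(α,β). Then for any x and 0 ≤ η ≤ 2/(βL), E[f(x − ηC(∇f(x)))] ≤ f(x) − (α/β)η(1 − ηβL/2)‖∇f(x)‖². -/

import Mathlib

open MeasureTheory

/-- One step of compressed gradient descent with `C ∈ B¹(α,β)`: if `f` is
`L`-smooth with gradient `f'`, then for `0 ≤ η ≤ 2/(βL)`,
`E[f(x − ηC(∇f(x)))] ≤ f(x) − (α/β)η(1 − ηβL/2)‖∇f(x)‖²`. -/
theorem stmt16 {d : ℕ} {Ω : Type*} [MeasurableSpace Ω]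
    (μ : Measure Ω) [IsProbabilityMeasure μ]
    (f : EuclideanSpace ℝ (Fin d) → ℝ) (f' : EuclideanSpace ℝ (Fin d) → EuclideanSpace ℝ (Fin d))
    (L : ℝ) (hL : 0 < L)
    (hsmooth : ∀ x y, f y ≤ f x + (inner ℝ (f' x) (y - x) : ℝ) + L / 2 * ‖y - x‖ ^ 2)
    (C : EuclideanSpace ℝ (Fin d) → Ω → EuclideanSpace ℝ (Fin d))
    (α β : ℝ) (hα : 0 < α) (hβ : 0 < β)
    (hintC : ∀ g, Integrable (C g) μ)
    (hintC2 : ∀ g, Integrable (fun ω => ‖C g ω‖ ^ 2) μ)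
    (hB : ∀ g, α * ‖g‖ ^ 2 ≤ ∫ ω, ‖C g ω‖ ^ 2 ∂μ ∧
      ∫ ω, ‖C g ω‖ ^ 2 ∂μ ≤ β * (inner ℝ (∫ ω, C g ω ∂μ) g : ℝ))
    (η : ℝ) (hη0 : 0 ≤ η) (hη : η ≤ 2 / (β * L)) (x : EuclideanSpace ℝ (Fin d))
    (hintf : Integrable (fun ω => f (x - η • C (f' x) ω)) μ) :
    ∫ ω, f (x - η • C (f' x) ω) ∂μ
      ≤ f x - (α / β) * η * (1 - η * β * L / 2) * ‖f' x‖ ^ 2 := by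
  set g := f' x with hg
  set S := ∫ ω, ‖C g ω‖ ^ 2 ∂μ with hSdef
  set m := ∫ ω, C g ω ∂μ with hmdef
  have hS1 : α * ‖g‖ ^ 2 ≤ S := (hB g).1
  have hS2 : S ≤ β * (inner ℝ m g : ℝ) := (hB g).2
  have hS0 : 0 ≤ S := integral_nonneg fun ω => by positivity
  -- integrability of the inner product term
  have hint_inner : Integrable (fun ω => (inner ℝ g (C g ω) : ℝ)) μ :=
    ((innerSL ℝ g).integrable_comp (hintC g))
  -- pointwise bound from smoothness
  have hpt : ∀ ω, f (x - η • C g ω)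
      ≤ f x + (-(η * (inner ℝ g (C g ω) : ℝ))) + (L / 2 * η ^ 2) * ‖C g ω‖ ^ 2 := by
    intro ω
    have h := hsmooth x (x - η • C g ω)
    have h1 : (x - η • C g ω) - x = -(η • C g ω) := by abel
    rw [h1] at h
    have h2 : (inner ℝ g (-(η • C g ω)) : ℝ) = -(η * (inner ℝ g (C g ω) : ℝ)) := by
      rw [inner_neg_right, real_inner_smul_right]
    have h3 : ‖-(η • C g ω)‖ ^ 2 = η ^ 2 * ‖C g ω‖ ^ 2 := by
      rw [norm_neg, norm_smul]
      simp [mul_pow, abs_of_nonneg hη0]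
    rw [h2, h3] at h
    linarith [h]
  have hintRHS : Integrable
      (fun ω => f x + (-(η * (inner ℝ g (C g ω) : ℝ))) + (L / 2 * η ^ 2) * ‖C g ω‖ ^ 2) μ := by
    exact ((integrable_const (f x)).add ((hint_inner.const_mul η).neg)).add
      ((hintC2 g).const_mul _)
  have hmono : ∫ ω, f (x - η • C g ω) ∂μ
      ≤ ∫ ω, (f x + (-(η * (inner ℝ g (C g ω) : ℝ))) + (L / 2 * η ^ 2) * ‖C g ω‖ ^ 2) ∂μ :=
    integral_mono hintf hintRHS hpt
  have hcalc : ∫ ω, (f x + (-(η * (inner ℝ g (C g ω) : ℝ))) + (L / 2 * η ^ 2) * ‖C g ω‖ ^ 2) ∂μ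
      = f x + (-(η * (inner ℝ g m : ℝ))) + (L / 2 * η ^ 2) * S := by
    have e1 : ∀ ω, f x + (-(η * (inner ℝ g (C g ω) : ℝ))) + (L / 2 * η ^ 2) * ‖C g ω‖ ^ 2
        = f x + ((L / 2 * η ^ 2) * ‖C g ω‖ ^ 2 - η * (inner ℝ g (C g ω) : ℝ)) := fun ω => by ring
    simp_rw [e1]
    have hIa : Integrable (fun ω => L / 2 * η ^ 2 * ‖C g ω‖ ^ 2) μ := (hintC2 g).const_mul _
    have hIb : Integrable (fun ω => η * (inner ℝ g (C g ω) : ℝ)) μ := hint_inner.const_mul η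
    have hIc : Integrable
        (fun ω => L / 2 * η ^ 2 * ‖C g ω‖ ^ 2 - η * (inner ℝ g (C g ω) : ℝ)) μ := hIa.sub hIb
    rw [integral_add (integrable_const _) hIc,
      integral_const, integral_sub hIa hIb,
      integral_const_mul, integral_const_mul, integral_inner (hintC g)]
    simp [← hSdef, ← hmdef]
    ring
  rw [hcalc] at hmono
  -- arithmetic finish
  have hinner : (inner ℝ g m : ℝ) = (inner ℝ m g : ℝ) := real_inner_comm _ _
  have hηβL : η * (β * L) ≤ 2 := by
    rw [← le_div_iff₀ (by positivity)]; exact hη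
  have hcoef : 0 ≤ 1 - η * β * L / 2 := by nlinarith
  have key : f x + (-(η * (inner ℝ g m : ℝ))) + (L / 2 * η ^ 2) * S
      ≤ f x - (α / β) * η * (1 - η * β * L / 2) * ‖g‖ ^ 2 := by
    rw [hinner]
    have h1 : η / β * S ≤ η * (inner ℝ m g : ℝ) := by
      rw [div_mul_eq_mul_div, div_le_iff₀ hβ]
      nlinarith
    have h2 : (α / β) * η * (1 - η * β * L / 2) * ‖g‖ ^ 2
        ≤ (η / β) * (1 - η * β * L / 2) * S := by
      have hc : 0 ≤ (η / β) * (1 - η * β * L / 2) := by positivity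
      have : (α / β) * η * (1 - η * β * L / 2) * ‖g‖ ^ 2
          = ((η / β) * (1 - η * β * L / 2)) * (α * ‖g‖ ^ 2) := by ring
      rw [this]
      exact mul_le_mul_of_nonneg_left hS1 hc
    have h3 : (η / β) * (1 - η * β * L / 2) * S = η / β * S - (L / 2 * η ^ 2) * S := by
      field_simp
    linarith
  linarith
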